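/- arXiv:2211.02255 — 4 statements merged into one kernel-verified Lean document; each statement's English description precedes it below -/
import Mathlib

section
/- Let S = Σ_{k=0}^∞ α_k be an absolutely convergent series of real numbers, and let τ be a random variable with values in the nonnegative integers such that P(τ ≥ n) > 0 for all n. Then the Russian Roulette estimator Ŝ := Σ_{i=0}^τ α_i / P(τ ≥ i) satisfies E[Ŝ] = S. -/
/-- Russian Roulette estimator unbiasedness: if `S = ∑ α k` converges absolutely
and `τ` is an ℕ-valued random variable (with mass function `p`) whose tail
probabilities `P(τ ≥ n)` are all positive, then
`E[∑_{i=0}^τ α i / P(τ ≥ i)] = ∑ α k`. -/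
theorem russian_roulette_unbiased
    (α : ℕ → ℝ) (hα : Summable (fun k => |α k|))
    (p : ℕ → ℝ) (hp0 : ∀ k, 0 ≤ p k) (hp1 : HasSum p 1)
    (tail : ℕ → ℝ) (htail : ∀ n, HasSum (fun k => if n ≤ k then p k else 0) (tail n))
    (htailpos : ∀ n, 0 < tail n) :
    ∑' t : ℕ, p t * (∑ i ∈ Finset.range (t + 1), α i / tail i) = ∑' k, α k := by
  set f : ℕ × ℕ → ℝ := fun q => if q.1 ≤ q.2 then p q.2 * (α q.1 / tail q.1) else 0 with hf
  -- inner sums (over t, for fixed i)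
  have hinner : ∀ i, HasSum (fun t => f (i, t)) (α i) := by
    intro i
    have := (htail i).mul_right (α i / tail i)
    have heq : (fun t => (if i ≤ t then p t else 0) * (α i / tail i)) = fun t => f (i, t) := by
      funext t; simp [hf, ite_mul]
    rw [heq] at this
    rwa [mul_comm, div_mul_cancel₀ _ (htailpos i).ne'] at this
  have hinnerabs : ∀ i, HasSum (fun t => |f (i, t)|) (|α i|) := by
    intro i
    have := (htail i).mul_right (|α i| / tail i)
    have heq : (fun t => (if i ≤ t then p t else 0) * (|α i| / tail i))
        = fun t => |f (i, t)| := by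
      funext t
      by_cases h : i ≤ t
      · simp only [hf, h, if_true]
        rw [abs_mul, abs_of_nonneg (hp0 t), abs_div, abs_of_pos (htailpos i)]
      · simp [hf, h]
    rw [heq] at this
    rwa [mul_comm, div_mul_cancel₀ _ (htailpos i).ne'] at this
  -- summability of |f|
  have habs : Summable fun q => |f q| := by
    rw [summable_prod_of_nonneg (fun q => abs_nonneg _)]
    refine ⟨fun i => (hinnerabs i).summable, ?_⟩
    have : (fun i => ∑' t, |f (i, t)|) = fun i => |α i| := by
      funext i; exact (hinnerabs i).tsum_eq
    rw [this]; exact hα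
  have hsum : Summable f := habs.of_abs
  -- sums over i for fixed t are finite sums
  have hcol : ∀ t : ℕ, ∑' i, f (i, t) = p t * ∑ i ∈ Finset.range (t + 1), α i / tail i := by
    intro t
    rw [tsum_eq_sum (s := Finset.range (t + 1)) (by
      intro i hi
      simp only [Finset.mem_range, not_lt] at hi
      simp [hf, Nat.not_le.mpr (Nat.lt_of_lt_of_le (Nat.lt_succ_self t) hi)])]
    rw [Finset.mul_sum]
    refine Finset.sum_congr rfl fun i hi => ?_
    simp only [Finset.mem_range, Nat.lt_succ_iff] at hi
    simp [hf, hi, mul_comm]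
  calc ∑' t : ℕ, p t * (∑ i ∈ Finset.range (t + 1), α i / tail i)
      = ∑' t, ∑' i, f (i, t) := by
        exact tsum_congr fun t => (hcol t).symm
    _ = ∑' i, ∑' t, f (i, t) := Summable.tsum_comm (f := fun i t => f (i, t)) hsum
    _ = ∑' i, α i := tsum_congr fun i => (hinner i).tsum_eq
end

section
/- If f : Σ* → ℝ has Hankel matrix H_f of finite rank n, then every row of H_f lies in the span of n rows of H_f indexed by some prefixes p₁,…,p_n, and consequently the row of H_f indexed by uσ (for any u ∈ Σ*, σ ∈ Σ) is a linear combination of these basis rows with coefficients depending linearly on the row of u; this yields an n-state WFA computing f. -/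
open Matrix

noncomputable def wfaFun {σ : Type*} {n : ℕ} (α : Fin n → ℝ)
    (A : σ → Matrix (Fin n) (Fin n) ℝ) (ω : Fin n → ℝ) : List σ → ℝ :=
  fun u => α ⬝ᵥ ((u.map A).prod *ᵥ ω)

/-- If the Hankel matrix of `f` has finite rank `n`, then there are `n` prefixes
`p₁, …, p_n` whose rows span all rows of the Hankel matrix, and `f` is computed
by an `n`-state WFA. -/
theorem wfa_of_finite_hankel_rank {σ : Type*} [Fintype σ] {n : ℕ}
    (f : List σ → ℝ)
    (hrank : Module.rank ℝ
      ↥(Submodule.span ℝ (Set.range fun u : List σ => fun v : List σ => f (u ++ v))) = n) :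
    ∃ p : Fin n → List σ,
      Submodule.span ℝ (Set.range fun i : Fin n => fun v : List σ => f (p i ++ v)) =
        Submodule.span ℝ (Set.range fun u : List σ => fun v : List σ => f (u ++ v)) ∧
      ∃ (α : Fin n → ℝ) (A : σ → Matrix (Fin n) (Fin n) ℝ) (ω : Fin n → ℝ),
        ∀ u, f u = wfaFun α A ω u := by
  classical
  set row : List σ → (List σ → ℝ) := fun u v => f (u ++ v) with hrow
  obtain ⟨s, hs_sub, hs_span, hs_li⟩ := exists_linearIndependent ℝ (Set.range row)
  have hcard : Cardinal.mk s = n := by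
    have h := rank_span_set hs_li
    rw [hs_span, hrank] at h
    exact h.symm
  obtain ⟨hf, hcards⟩ := Cardinal.mk_eq_nat_iff_fintype.mp hcard
  let e : Fin n ≃ s := (hf.equivFinOfCardEq hcards).symm
  have hp' : ∀ i : Fin n, ∃ u, row u = (e i : List σ → ℝ) := fun i => hs_sub (e i).2
  choose p hp using hp'
  have hrange : (Set.range fun i => row (p i)) = s := by
    ext x
    constructor
    · rintro ⟨i, rfl⟩
      show row (p i) ∈ s
      rw [hp i]; exact (e i).2
    · intro hx
      refine ⟨e.symm ⟨x, hx⟩, ?_⟩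
      show row (p (e.symm ⟨x, hx⟩)) = x
      rw [hp]; simp
  have hspan : Submodule.span ℝ (Set.range fun i => row (p i)) =
      Submodule.span ℝ (Set.range row) := by rw [hrange, hs_span]
  refine ⟨p, hspan, ?_⟩
  have hmem : ∀ u : List σ, row u ∈ Submodule.span ℝ (Set.range fun i => row (p i)) := by
    intro u
    rw [hspan]
    exact Submodule.subset_span ⟨u, rfl⟩
  have coeff : ∀ u : List σ, ∃ c : Fin n → ℝ, (∑ i, c i • row (p i)) = row u := by
    intro u
    exact (Submodule.mem_span_range_iff_exists_fun ℝ).mp (hmem u)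
  choose c hc using coeff
  set α : Fin n → ℝ := c [] with hα
  set A : σ → Matrix (Fin n) (Fin n) ℝ := fun a => Matrix.of fun i j => c (p i ++ [a]) j with hA
  set ω : Fin n → ℝ := fun i => f (p i) with hω
  have key : ∀ u : List σ,
      (∑ i, (Matrix.vecMul α ((u.map A).prod)) i • row (p i)) = row u := by
    intro u
    induction u using List.reverseRecOn with
    | nil => simpa using hc []
    | append_singleton u a ih =>
      have hM : ((u ++ [a]).map A).prod = (u.map A).prod * A a := by
        simp
      rw [hM, ← Matrix.vecMul_vecMul]
      set β := Matrix.vecMul α ((u.map A).prod) with hβ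
      funext v
      have h1 : row (u ++ [a]) v = row u (a :: v) := by
        simp [hrow, List.append_assoc]
      have h2 : row u (a :: v) = ∑ i, β i * row (p i) (a :: v) := by
        rw [← ih]; simp
      have h3 : ∀ i, row (p i) (a :: v) = row (p i ++ [a]) v := by
        intro i; simp [hrow, List.append_assoc]
      have h4 : ∀ i, row (p i ++ [a]) v = ∑ j, A a i j * row (p j) v := by
        intro i
        rw [← hc (p i ++ [a])]
        simp [hA]
      have lhs : (∑ j, (Matrix.vecMul β (A a)) j • row (p j)) v =
          ∑ j, (∑ i, β i * A a i j) * row (p j) v := by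
        simp [Matrix.vecMul, dotProduct]
      rw [lhs, h1, h2]
      simp_rw [h3, h4, Finset.mul_sum, Finset.sum_mul]
      rw [Finset.sum_comm]
      simp only [mul_assoc]
  refine ⟨α, A, ω, ?_⟩
  intro u
  have := congrFun (key u).symm (([] : List σ))
  have hfu : f u = row u [] := by simp [hrow]
  have h5 : (∑ i, (Matrix.vecMul α ((u.map A).prod)) i • row (p i)) ([] : List σ) =
      (Matrix.vecMul α ((u.map A).prod)) ⬝ᵥ ω := by
    simp [dotProduct, hω, hrow, Finset.sum_apply]
  rw [hfu, this, h5]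
  simp only [wfaFun, Matrix.dotProduct_mulVec]
end

section
/- For any function f : Σ* → ℝ, the rank of the Hankel matrix H_f is a lower bound on the number of states of any WFA computing f, and moreover there exists a WFA with exactly rank(H_f) states computing f whenever rank(H_f) is finite. Hence rank(H_f) equals the minimal number of states of a WFA computing f. -/
open Matrix

/-- The rank of the Hankel matrix of `f` (dimension of the span of its rows). -/
noncomputable def hankelRank {σ : Type*} (f : List σ → ℝ) : Cardinal :=
  Module.rank ℝ
    ↥(Submodule.span ℝ (Set.range fun u : List σ => fun v : List σ => f (u ++ v)))

/-- The shift operator `g ↦ (v ↦ g (a :: v))` as a linear map. -/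
def shiftLM {σ : Type*} (a : σ) : (List σ → ℝ) →ₗ[ℝ] (List σ → ℝ) where
  toFun g := fun v => g (a :: v)
  map_add' _ _ := rfl
  map_smul' _ _ := rfl

lemma mulVec_dotProduct_eq {n : ℕ} (M : Matrix (Fin n) (Fin n) ℝ) (x y : Fin n → ℝ) :
    (M *ᵥ x) ⬝ᵥ y = x ⬝ᵥ (Mᵀ *ᵥ y) := by
  rw [dotProduct_comm, dotProduct_mulVec, Matrix.mulVec_transpose, dotProduct_comm]

/-- Fliess / Carlyle–Paz theorem: the rank of the Hankel matrix of `f` is a lower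
bound on the number of states of any WFA computing `f`, and if this rank is a
finite number `n` then some `n`-state WFA computes `f`; hence `rank(H_f)` is the
minimal number of states of a WFA computing `f`. -/
theorem fliess_carlyle_paz {σ : Type*} [Fintype σ] (f : List σ → ℝ) :
    (∀ (n : ℕ) (α : Fin n → ℝ) (A : σ → Matrix (Fin n) (Fin n) ℝ) (ω : Fin n → ℝ),
        (∀ u, f u = wfaFun α A ω u) → hankelRank f ≤ n) ∧
    (∀ n : ℕ, hankelRank f = n →
        ∃ (α : Fin n → ℝ) (A : σ → Matrix (Fin n) (Fin n) ℝ) (ω : Fin n → ℝ),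
          ∀ u, f u = wfaFun α A ω u) := by
  constructor
  · -- lower bound
    intro n α A ω hf
    -- the linear map sending a state vector to the corresponding "row" function
    set L : (Fin n → ℝ) →ₗ[ℝ] (List σ → ℝ) :=
      { toFun := fun x => fun v => x ⬝ᵥ ((v.map A).prod *ᵥ ω)
        map_add' := by intro x y; funext v; simp [add_dotProduct]
        map_smul' := by intro c x; funext v; simp [smul_dotProduct] } with hL
    set s : Set (List σ → ℝ) := Set.range (fun i : Fin n => L (Pi.basisFun ℝ (Fin n) i))
      with hs
    have hsub : Submodule.span ℝ
        (Set.range fun u : List σ => fun v : List σ => f (u ++ v)) ≤ Submodule.span ℝ s := by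
      rw [Submodule.span_le]
      rintro _ ⟨u, rfl⟩
      show (fun v : List σ => f (u ++ v)) ∈ (Submodule.span ℝ s : Set (List σ → ℝ))
      have hrow : (fun v : List σ => f (u ++ v)) = L (α ᵥ* (u.map A).prod) := by
        funext v
        simp only [hL, LinearMap.coe_mk, AddHom.coe_mk]
        rw [hf (u ++ v)]
        simp [wfaFun, List.map_append, List.prod_append, ← mulVec_mulVec,
          dotProduct_mulVec]
      rw [hrow]
      have hx : (α ᵥ* (u.map A).prod) ∈
          Submodule.span ℝ (Set.range (Pi.basisFun ℝ (Fin n))) := by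
        rw [Module.Basis.span_eq]; trivial
      have := Submodule.apply_mem_span_image_of_mem_span (f := L) hx
      rwa [← Set.range_comp] at this
    have h1 : hankelRank f ≤ Module.rank ℝ (Submodule.span ℝ s) :=
      Submodule.rank_mono hsub
    have h2 : Module.rank ℝ (Submodule.span ℝ s) ≤ Cardinal.mk s := rank_span_le s
    have h3 : Cardinal.mk s ≤ (n : Cardinal) := by
      have := Cardinal.mk_range_le_lift
        (f := fun i : Fin n => L (Pi.basisFun ℝ (Fin n) i))
      simpa [hs, Cardinal.lift_natCast] using this
    exact (h1.trans h2).trans h3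
  · -- existence
    intro n hrk
    set row : List σ → (List σ → ℝ) := fun u => fun v : List σ => f (u ++ v) with hrow
    set V : Submodule ℝ (List σ → ℝ) := Submodule.span ℝ (Set.range row) with hV
    have hrkV : Module.rank ℝ V = n := hrk
    have hfin : Module.Finite ℝ V := Module.finite_of_rank_eq_nat hrkV
    have hfr : Module.finrank ℝ V = n := Module.finrank_eq_of_rank_eq hrkV
    let b : Module.Basis (Fin n) ℝ V := Module.finBasisOfFinrankEq ℝ V hfr
    -- the shift operator restricted to V
    have hshift : ∀ (a : σ), ∀ x ∈ V, shiftLM a x ∈ V := by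
      intro a
      have : V.map (shiftLM a) ≤ V := by
        rw [hV, Submodule.map_span, Submodule.span_le]
        rintro _ ⟨_, ⟨u, rfl⟩, rfl⟩
        apply Submodule.subset_span
        exact ⟨u ++ [a], by funext v; simp [shiftLM, hrow]⟩
      intro x hx
      exact this (Submodule.mem_map_of_mem hx)
    set T : σ → (V →ₗ[ℝ] V) := fun a => (shiftLM a).restrict (hshift a) with hT
    set A : σ → Matrix (Fin n) (Fin n) ℝ := fun a => (LinearMap.toMatrix b b (T a))ᵀ
      with hA
    set ω : Fin n → ℝ := fun i => (b i : List σ → ℝ) [] with hω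
    -- evaluation at [] in coordinates
    have heval : ∀ g : V, (g : List σ → ℝ) [] = ⇑(b.repr g) ⬝ᵥ ω := by
      intro g
      conv_lhs => rw [← b.sum_repr g]
      rw [Submodule.coe_sum]
      simp [dotProduct, hω]
    -- the key identity, by induction on the word
    have key : ∀ (u : List σ) (g : V),
        (g : List σ → ℝ) u = ⇑(b.repr g) ⬝ᵥ ((u.map A).prod *ᵥ ω) := by
      intro u
      induction u with
      | nil => intro g; simpa using heval g
      | cons a u ih =>
        intro g
        have h1 : (g : List σ → ℝ) (a :: u) = ((T a g : V) : List σ → ℝ) u := by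
          simp [hT, LinearMap.restrict_apply, shiftLM]
        rw [h1, ih (T a g)]
        have h2 : ⇑(b.repr (T a g)) = (LinearMap.toMatrix b b (T a)) *ᵥ ⇑(b.repr g) :=
          (LinearMap.toMatrix_mulVec_repr b b (T a) g).symm
        rw [h2, List.map_cons, List.prod_cons, ← mulVec_mulVec,
          mulVec_dotProduct_eq]
    -- the row of the empty word belongs to V
    have hmem : row [] ∈ V := Submodule.subset_span ⟨[], rfl⟩
    refine ⟨⇑(b.repr ⟨row [], hmem⟩), A, ω, fun u => ?_⟩
    have := key u ⟨row [], hmem⟩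
    simpa [hrow, wfaFun] using this
end

section
/- Let S = Σ_{k=0}^∞ α_k with α_k ≥ 0 for all k, and let τ be ℕ-valued with P(τ ≥ n) > 0 for all n. Then the Russian Roulette estimator Ŝ = Σ_{i=0}^τ α_i/P(τ ≥ i) is almost surely nonnegative and E[Ŝ] = S (allowing the value +∞ on both sides). -/
open scoped ENNReal

/-- Russian Roulette estimator for a series with nonnegative terms (values in
`ℝ≥0∞`, allowing `+∞` on both sides): the estimator is nonnegative and
`E[∑_{i=0}^τ α i / P(τ ≥ i)] = ∑ α k`. -/
theorem russian_roulette_unbiased_nonneg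
    (α : ℕ → ℝ≥0∞)
    (p : ℕ → ℝ≥0∞) (hp1 : ∑' k, p k = 1)
    (tail : ℕ → ℝ≥0∞) (htail : ∀ n, tail n = ∑' k, if n ≤ k then p k else 0)
    (htailpos : ∀ n, 0 < tail n) :
    (∀ t : ℕ, 0 ≤ ∑ i ∈ Finset.range (t + 1), α i / tail i) ∧
      ∑' t : ℕ, p t * (∑ i ∈ Finset.range (t + 1), α i / tail i) = ∑' k, α k := by
  have htaille : ∀ n, tail n ≤ 1 := by
    intro n
    rw [htail n, ← hp1]
    exact ENNReal.tsum_le_tsum (fun k => by split <;> simp)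
  refine ⟨fun t => zero_le, ?_⟩
  have key : ∀ t : ℕ, p t * (∑ i ∈ Finset.range (t + 1), α i / tail i)
      = ∑' i : ℕ, if i ≤ t then p t * (α i / tail i) else 0 := by
    intro t
    rw [tsum_eq_sum (s := Finset.range (t + 1)) (fun i hi => by
      rw [if_neg]
      exact fun h => hi (Finset.mem_range.2 (Nat.lt_succ_of_le h)))]
    rw [Finset.mul_sum]
    exact Finset.sum_congr rfl fun i hi => by
      rw [if_pos (Nat.lt_succ_iff.mp (Finset.mem_range.1 hi))]
  calc ∑' t : ℕ, p t * (∑ i ∈ Finset.range (t + 1), α i / tail i)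
      = ∑' t : ℕ, ∑' i : ℕ, if i ≤ t then p t * (α i / tail i) else 0 := tsum_congr key
    _ = ∑' i : ℕ, ∑' t : ℕ, if i ≤ t then p t * (α i / tail i) else 0 := ENNReal.tsum_comm
    _ = ∑' i : ℕ, α i := by
        refine tsum_congr fun i => ?_
        have h1 : ∀ t : ℕ, (if i ≤ t then p t * (α i / tail i) else 0)
            = (α i / tail i) * (if i ≤ t then p t else 0) := by
          intro t; split
          · ring
          · simp
        rw [tsum_congr h1, ENNReal.tsum_mul_left, ← htail i,
          ENNReal.div_mul_cancel (htailpos i).ne' (lt_of_le_of_lt (htaille i) (by simp)).ne]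
end
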